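/- Let H be the constant positive matrix [[ρ/w, −cρ/w],[−cρ/w, ρ/w̃]] with det H = π²ρ² > 0 and w̃ = w/(π²w² + c²). If Q_a(t) solves J Q_a'(t) = a H Q_a(t), Q_a(0) = Id on [0,1], then for a ≠ b, (1/(a−b))·det(Q_a(1)e₁, Q_b(1)e₁) = sin(πρ(b−a))/(πw(b−a)). -/

import Mathlib

lemma hasDerivAt_ccos (α : ℂ) (t : ℝ) :
    HasDerivAt (fun s : ℝ => Complex.cos (α * s)) (-Complex.sin (α * t) * α) t := by
  have h1 : HasDerivAt (fun z : ℂ => Complex.cos (α * z)) (-Complex.sin (α * t) * α) (t : ℂ) := by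
    simpa [Function.comp_def] using (Complex.hasDerivAt_cos (α * (t:ℂ))).comp (t:ℂ) ((hasDerivAt_id (t:ℂ)).const_mul α)
  exact h1.comp_ofReal

lemma hasDerivAt_csin (α : ℂ) (t : ℝ) :
    HasDerivAt (fun s : ℝ => Complex.sin (α * s)) (Complex.cos (α * t) * α) t := by
  have h1 : HasDerivAt (fun z : ℂ => Complex.sin (α * z)) (Complex.cos (α * t) * α) (t : ℂ) := by
    simpa [Function.comp_def] using (Complex.hasDerivAt_sin (α * (t:ℂ))).comp (t:ℂ) ((hasDerivAt_id (t:ℂ)).const_mul α)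
  exact h1.comp_ofReal

lemma key_ode (p m11 m12 m21 a : ℂ) (hp : p ≠ 0) (hdet : m11 ^ 2 + m12 * m21 = -p ^ 2)
    (u0 u1 : ℝ → ℂ)
    (hu0 : ∀ t, HasDerivAt u0 (a * (m11 * u0 t + m12 * u1 t)) t)
    (hu1 : ∀ t, HasDerivAt u1 (a * (m21 * u0 t - m11 * u1 t)) t)
    (hi0 : u0 0 = 1) (hi1 : u1 0 = 0) :
    p * u0 1 = p * Complex.cos (a * p) + Complex.sin (a * p) * m11 ∧
      p * u1 1 = Complex.sin (a * p) * m21 := by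
  set α : ℂ := a * p with hα
  set g0 : ℝ → ℂ := fun t =>
    (p * Complex.cos (α * t) - Complex.sin (α * t) * m11) * u0 t
      - Complex.sin (α * t) * m12 * u1 t with hg0
  set g1 : ℝ → ℂ := fun t =>
    -(Complex.sin (α * t) * m21) * u0 t
      + (p * Complex.cos (α * t) + Complex.sin (α * t) * m11) * u1 t with hg1
  have hd0 : ∀ t, HasDerivAt g0 0 t := by
    intro t
    have h := ((((hasDerivAt_ccos α t).const_mul p).sub
        ((hasDerivAt_csin α t).mul_const m11)).mul (hu0 t)).sub
        (((hasDerivAt_csin α t).mul_const m12).mul (hu1 t))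
    refine h.congr_deriv (Eq.symm ?_)
    simp only [Pi.sub_apply, Pi.add_apply, Pi.neg_apply]
    linear_combination (a * Complex.sin (α * (t:ℂ)) * u0 t) * hdet
  have hd1 : ∀ t, HasDerivAt g1 0 t := by
    intro t
    have h := ((((hasDerivAt_csin α t).mul_const m21).neg).mul (hu0 t)).add
        ((((hasDerivAt_ccos α t).const_mul p).add
          ((hasDerivAt_csin α t).mul_const m11)).mul (hu1 t))
    refine h.congr_deriv (Eq.symm ?_)
    simp only [Pi.sub_apply, Pi.add_apply, Pi.neg_apply]
    linear_combination (a * Complex.sin (α * (t:ℂ)) * u1 t) * hdet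
  have hc0 : g0 1 = g0 0 :=
    is_const_of_deriv_eq_zero (fun t => (hd0 t).differentiableAt)
      (fun t => (hd0 t).deriv) 1 0
  have hc1 : g1 1 = g1 0 :=
    is_const_of_deriv_eq_zero (fun t => (hd1 t).differentiableAt)
      (fun t => (hd1 t).deriv) 1 0
  have hz0 : g0 0 = p := by
    simp [hg0, hi0, hi1]
  have hz1 : g1 0 = 0 := by
    simp [hg1, hi0, hi1]
  rw [hz0] at hc0
  rw [hz1] at hc1
  simp only [hg0, hg1, Complex.ofReal_one, mul_one] at hc0 hc1
  have hpyth : Complex.sin α ^ 2 + Complex.cos α ^ 2 = 1 := Complex.sin_sq_add_cos_sq α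
  constructor
  · refine mul_left_cancel₀ hp ?_
    linear_combination (p * Complex.cos α + Complex.sin α * m11) * hc0
      + Complex.sin α * m12 * hc1
      + Complex.sin α ^ 2 * u0 1 * hdet - p ^ 2 * u0 1 * hpyth
  · refine mul_left_cancel₀ hp ?_
    linear_combination Complex.sin α * m21 * hc0
      + (p * Complex.cos α - Complex.sin α * m11) * hc1
      + Complex.sin α ^ 2 * u1 1 * hdet - p ^ 2 * u1 1 * hpyth

open Matrix


/-- For the constant canonical system `J Q_a' = a H Q_a`, `Q_a(0) = Id`, with
`H = [[ρ/w, −cρ/w],[−cρ/w, ρ/w̃]]`, `w̃ = w/(π²w² + c²)`, one has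
`(1/(a−b))·det(Q_a(1)e₁, Q_b(1)e₁) = sin(πρ(b−a))/(πw(b−a))`. -/
theorem stmt17 (ρ w c : ℝ) (hρ : 0 < ρ) (hw : 0 < w)
    (H : Matrix (Fin 2) (Fin 2) ℂ)
    (hH : H = !![((ρ / w : ℝ) : ℂ), ((-(c * ρ / w) : ℝ) : ℂ);
                 ((-(c * ρ / w) : ℝ) : ℂ),
                 ((ρ * (Real.pi ^ 2 * w ^ 2 + c ^ 2) / w : ℝ) : ℂ)])
    (Q Q' : ℂ → ℝ → Matrix (Fin 2) (Fin 2) ℂ)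
    (hQ0 : ∀ a, Q a 0 = 1)
    (hderiv : ∀ a t i j, HasDerivAt (fun s => Q a s i j) (Q' a t i j) t)
    (hODE : ∀ a t, (!![0, -1; 1, 0] : Matrix (Fin 2) (Fin 2) ℂ) * Q' a t =
      a • (H * Q a t)) :
    ∀ a b : ℂ, a ≠ b →
      (a - b)⁻¹ * Matrix.det !![Q a 1 0 0, Q b 1 0 0; Q a 1 1 0, Q b 1 1 0] =
        Complex.sin ((Real.pi : ℂ) * (ρ : ℂ) * (b - a)) /
          ((Real.pi : ℂ) * (w : ℂ) * (b - a)) := by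
  have hw' : (w : ℂ) ≠ 0 := by exact_mod_cast hw.ne'
  have hρ' : (ρ : ℂ) ≠ 0 := by exact_mod_cast hρ.ne'
  have hπ : (Real.pi : ℂ) ≠ 0 := by exact_mod_cast Real.pi_ne_zero
  set p : ℂ := (Real.pi : ℂ) * (ρ : ℂ) with hpdef
  have hp : p ≠ 0 := mul_ne_zero hπ hρ'
  set m11 : ℂ := -((c : ℂ) * ρ / w) with hm11
  set m12 : ℂ := (ρ : ℂ) * ((Real.pi : ℂ) ^ 2 * w ^ 2 + c ^ 2) / w with hm12
  set m21 : ℂ := -((ρ : ℂ) / w) with hm21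
  have hdet : m11 ^ 2 + m12 * m21 = -p ^ 2 := by
    rw [hm11, hm12, hm21, hpdef]
    field_simp
    ring
  have key : ∀ z : ℂ,
      p * Q z 1 0 0 = p * Complex.cos (z * p) + Complex.sin (z * p) * m11 ∧
        p * Q z 1 1 0 = Complex.sin (z * p) * m21 := by
    intro z
    refine key_ode p m11 m12 m21 z hp hdet (fun t => Q z t 0 0) (fun t => Q z t 1 0)
      ?_ ?_ ?_ ?_
    · intro t
      have h := congrFun (congrFun (hODE z t) 1) 0
      rw [hH] at h
      simp [Matrix.mul_apply, Matrix.vecMul, dotProduct, Fin.sum_univ_two, Matrix.vecHead, Matrix.vecTail] at h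
      have h' : Q' z t 0 0 = z * (m11 * Q z t 0 0 + m12 * Q z t 1 0) := by
        rw [hm11, hm12]
        linear_combination h
      exact h' ▸ hderiv z t 0 0
    · intro t
      have h := congrFun (congrFun (hODE z t) 0) 0
      rw [hH] at h
      simp [Matrix.mul_apply, Matrix.vecMul, dotProduct, Fin.sum_univ_two, Matrix.vecHead, Matrix.vecTail] at h
      have h' : Q' z t 1 0 = z * (m21 * Q z t 0 0 - m11 * Q z t 1 0) := by
        rw [hm11, hm21]
        linear_combination -h
      exact h' ▸ hderiv z t 1 0
    · show Q z (0 : ℝ) 0 0 = 1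
      rw [hQ0]; simp [Matrix.one_apply]
    · show Q z (0 : ℝ) 1 0 = 0
      rw [hQ0]; simp [Matrix.one_apply]
  intro a b hab
  obtain ⟨kA0, kA1⟩ := key a
  obtain ⟨kB0, kB1⟩ := key b
  have hsub : a - b ≠ 0 := sub_ne_zero.mpr hab
  have hsub' : b - a ≠ 0 := sub_ne_zero.mpr (Ne.symm hab)
  set cA := Complex.cos (a * p) with hcA
  set sA := Complex.sin (a * p) with hsA
  set cB := Complex.cos (b * p) with hcB
  set sB := Complex.sin (b * p) with hsB
  have hsin : Complex.sin (p * (b - a)) = sB * cA - cB * sA := by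
    rw [show p * (b - a) = b * p - a * p from by ring, Complex.sin_sub, hcA, hsA, hcB, hsB]
  have hm21w : m21 * w = -(ρ : ℂ) := by
    rw [hm21]; field_simp
  have key4 : (Q a 1 0 0 * Q b 1 1 0 - Q b 1 0 0 * Q a 1 1 0) * p =
      m21 * (sB * cA - cB * sA) := by
    refine mul_left_cancel₀ hp ?_
    linear_combination (p * Q b 1 1 0) * kA0
      + (p * cA + sA * m11) * kB1
      - (p * Q a 1 1 0) * kB0
      - (p * cB + sB * m11) * kA1
  have key5 : (Q a 1 0 0 * Q b 1 1 0 - Q b 1 0 0 * Q a 1 1 0) * p * w =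
      -(ρ : ℂ) * (sB * cA - cB * sA) := by
    linear_combination (w : ℂ) * key4 + (sB * cA - cB * sA) * hm21w
  rw [Matrix.det_fin_two_of, hsin, inv_mul_eq_div,
    div_eq_div_iff hsub (mul_ne_zero (mul_ne_zero hπ hw') hsub')]
  refine mul_left_cancel₀ hρ' ?_
  linear_combination (b - a) * key5
    - (Q a 1 0 0 * Q b 1 1 0 - Q b 1 0 0 * Q a 1 1 0) * (w : ℂ) * (b - a) * hpdef
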